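/- The system y·(1 − x) + x = 1/2, d/dx[(2x − 1)·y·x] = 0 (with y expressed as y = (1 − 2x)/(2(1 − x))), and x > 1 has the unique solution x = (3 + √5)/4, y = (3 + √5)/2. -/

import Mathlib

lemma deriv14 (x : ℝ) (hx : x ≠ 1) :
    deriv (fun t : ℝ => (2 * t - 1) * ((1 - 2 * t) / (2 * (1 - t))) * t) x =
      (2 * ((1 - 2 * x) / (2 * (1 - x))) +
        (2 * x - 1) * (((-2) * (2 * (1 - x)) - (1 - 2 * x) * (-2)) / (2 * (1 - x)) ^ 2)) * x +
      (2 * x - 1) * ((1 - 2 * x) / (2 * (1 - x))) * 1 := by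
  have hne : 2 * (1 - x) ≠ 0 := by
    intro h
    apply hx
    linarith [mul_left_cancel₀ (two_ne_zero (α := ℝ)) (h.trans (mul_zero 2).symm)]
  have hA : HasDerivAt (fun t : ℝ => 1 - 2 * t) (-2) x := by
    simpa using ((hasDerivAt_id x).const_mul 2).const_sub 1
  have hB : HasDerivAt (fun t : ℝ => 2 * (1 - t)) (-2) x := by
    simpa using ((hasDerivAt_id x).const_sub 1).const_mul 2
  have hC := hA.div hB hne
  have hD : HasDerivAt (fun t : ℝ => 2 * t - 1) 2 x := by
    simpa using ((hasDerivAt_id x).const_mul 2).sub_const 1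
  have hF := (hD.mul hC).mul (hasDerivAt_id x)
  exact hF.deriv

theorem stmt14 :
    ∀ x y : ℝ,
      ((1 - x) * y + x = 1 / 2 ∧
        y = (1 - 2 * x) / (2 * (1 - x)) ∧
        deriv (fun t : ℝ => (2 * t - 1) * ((1 - 2 * t) / (2 * (1 - t))) * t) x = 0 ∧
        1 < x)
      ↔ (x = (3 + Real.sqrt 5) / 4 ∧ y = (3 + Real.sqrt 5) / 2) := by
  have hs : Real.sqrt 5 ^ 2 = 5 := Real.sq_sqrt (by norm_num)
  have hs2 : (2:ℝ) < Real.sqrt 5 := by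
    nlinarith [Real.sqrt_nonneg 5]
  intro x y
  constructor
  · rintro ⟨h1, h2, h3, h4⟩
    have hx : x ≠ 1 := by linarith
    have hne : 2 * (1 - x) ≠ 0 := by
      intro h; apply hx; linarith [mul_left_cancel₀ (two_ne_zero (α := ℝ)) (h.trans (mul_zero 2).symm)]
    rw [deriv14 x hx] at h3
    have hCx : 8*x^3 - 16*x^2 + 8*x - 1 = 0 := by
      field_simp at h3
      have h' : (8*x^3 - 16*x^2 + 8*x - 1) * (2*(2*(1-x))^2) = 0 := by linear_combination (2*(2*(1-x))^2) * h3
      rcases mul_eq_zero.mp h' with h | h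
      · exact h
      · exact absurd h (by positivity)
    have hcubic : (2 * x - 1) * ((4 * x - 3 - Real.sqrt 5) * (4 * x - 3 + Real.sqrt 5)) = 0 := by
      linear_combination 4*hCx - (2*x-1)*hs
    have hx0 : x = (3 + Real.sqrt 5) / 4 := by
      rcases mul_eq_zero.mp hcubic with h | h
      · linarith
      rcases mul_eq_zero.mp h with h | h
      · linarith
      · nlinarith
    refine ⟨hx0, ?_⟩
    rw [h2, hx0]
    rw [div_eq_iff (by intro h; apply hne; rw [hx0]; linarith [mul_left_cancel₀ (two_ne_zero (α := ℝ)) (h.trans (mul_zero 2).symm)])]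
    · nlinarith [hs]
  · rintro ⟨hx0, hy0⟩
    have hx : x ≠ 1 := by rw [hx0]; intro h; nlinarith
    have hgt : 1 < x := by rw [hx0]; nlinarith
    have hne : (2:ℝ) * (1 - x) ≠ 0 := by
      intro h; apply hx; linarith [mul_left_cancel₀ (two_ne_zero (α := ℝ)) (h.trans (mul_zero 2).symm)]
    have hy : y = (1 - 2 * x) / (2 * (1 - x)) := by
      rw [hy0, eq_div_iff hne, hx0]
      nlinarith [hs]
    refine ⟨?_, hy, ?_, hgt⟩
    · rw [hy]
      field_simp
      ring
    · have hCx : 8*x^3 - 16*x^2 + 8*x - 1 = 0 := by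
        rw [hx0]; nlinarith [hs]
      rw [deriv14 x hx]
      field_simp
      linear_combination hCx
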